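/- For odd n = 2s+1 ≥ 3, the polynomial c_s(x) - c_{s-1}(x) equals the product over divisors d of n with d < n of the minimal polynomial over ℚ of 2·cos(π·d/n); equivalently, ∏_{k=1}^{s}(x - 2cos((2k-1)π/n)) = ∏_{d | n, d < n} ψ_{2n/d}(x), where ψ_m denotes the minimal polynomial of 2cos(2π/m). -/

import Mathlib

open Polynomial Real IntermediateField

/-- `c n` is the paper's `c_{n-1}`. -/
noncomputable def c : ℕ → Polynomial ℤ
  | 0 => 0
  | 1 => 1
  | (n + 2) => X * c (n + 1) - c n

lemma c_zero : c 0 = 0 := rfl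
lemma c_one : c 1 = 1 := rfl
lemma c_add_two (n : ℕ) : c (n + 2) = X * c (n + 1) - c n := rfl

/-- evaluation of `c` at `2 cos θ`. -/
lemma sin_mul_c_eval (θ : ℝ) : ∀ k : ℕ,
    Real.sin θ * ((c k).map (Int.castRingHom ℝ)).eval (2 * Real.cos θ) = Real.sin (k * θ)
  | 0 => by simp [c_zero]
  | 1 => by simp [c_one]
  | (k + 2) => by
      have h1 := sin_mul_c_eval θ (k + 1)
      have h0 := sin_mul_c_eval θ k
      have key : Real.sin ((k + 2 : ℕ) * θ)
          = 2 * Real.cos θ * Real.sin ((k + 1 : ℕ) * θ) - Real.sin (k * θ) := by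
        push_cast
        have e1 : ((k : ℝ) + 2) * θ = ((k : ℝ) + 1) * θ + θ := by ring
        have e2 : (k : ℝ) * θ = ((k : ℝ) + 1) * θ - θ := by ring
        rw [e1, e2, Real.sin_add, Real.sin_sub]
        ring
      rw [c_add_two, Polynomial.map_sub, Polynomial.map_mul, Polynomial.map_X, eval_sub,
        eval_mul, eval_X, key]
      rw [← h1, ← h0]
      ring

lemma c_monic_natDegree : ∀ k : ℕ, (c (k + 1)).Monic ∧ (c (k + 1)).natDegree = k
  | 0 => by simp [c_one, monic_one]
  | 1 => by
      have : c 2 = X := by rw [c_add_two, c_one, c_zero]; ring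
      simp [this, monic_X]
  | (k + 2) => by
      obtain ⟨hm1, hd1⟩ := c_monic_natDegree (k + 1)
      obtain ⟨hm0, hd0⟩ := c_monic_natDegree k
      have hXm : (X * c (k + 2)).Monic := (monic_X.mul hm1)
      have hXd : (X * c (k + 2)).natDegree = k + 2 := by
        rw [natDegree_mul X_ne_zero hm1.ne_zero, natDegree_X, hd1]; ring
      have hlt : (c (k + 1)).degree < (X * c (k + 2)).degree := by
        rw [degree_eq_natDegree hm0.ne_zero, degree_eq_natDegree hXm.ne_zero, hXd, hd0]
        exact_mod_cast by omega
      refine ⟨?_, ?_⟩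
      · rw [c_add_two]; exact hXm.sub_of_left hlt
      · rw [c_add_two, natDegree_sub_eq_left_of_natDegree_lt, hXd]
        rw [hXd, hd0]; omega


lemma diff_monic (s : ℕ) (hs : 1 ≤ s) : (c (s+1) - c s).Monic := by
  obtain ⟨t, rfl⟩ : ∃ t, s = t + 1 := ⟨s - 1, by omega⟩
  obtain ⟨hm2, hd2⟩ := c_monic_natDegree (t + 1)
  obtain ⟨hm1, hd1⟩ := c_monic_natDegree t
  refine hm2.sub_of_left ?_
  rw [degree_eq_natDegree hm1.ne_zero, degree_eq_natDegree hm2.ne_zero, hd1, hd2]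
  exact_mod_cast by omega

lemma diff_natDegree (s : ℕ) (hs : 1 ≤ s) : (c (s+1) - c s).natDegree = s := by
  obtain ⟨t, rfl⟩ : ∃ t, s = t + 1 := ⟨s - 1, by omega⟩
  obtain ⟨hm2, hd2⟩ := c_monic_natDegree (t + 1)
  obtain ⟨hm1, hd1⟩ := c_monic_natDegree t
  rw [natDegree_sub_eq_left_of_natDegree_lt (by omega), hd2]

lemma diff_eval (s : ℕ) (θ : ℝ) :
    Real.sin θ * ((c (s+1) - c s).map (Int.castRingHom ℝ)).eval (2 * Real.cos θ)
      = Real.sin ((s+1) * θ) - Real.sin (s * θ) := by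
  rw [Polynomial.map_sub, eval_sub, mul_sub, sin_mul_c_eval, sin_mul_c_eval]
  push_cast; ring_nf

lemma diff_root (s k : ℕ) (hk : k < s) :
    ((c (s+1) - c s).map (Int.castRingHom ℝ)).eval
      (2 * Real.cos ((2 * k + 1) * π / (2 * s + 1))) = 0 := by
  set θ : ℝ := (2 * k + 1) * π / (2 * s + 1) with hθ
  have hn : (0:ℝ) < 2 * s + 1 := by positivity
  have hθpos : 0 < θ := by
    apply div_pos (by positivity) hn
  have hθlt : θ < π := by
    rw [hθ, div_lt_iff₀ hn]
    have : (2 * (k:ℝ) + 1) < 2 * s + 1 := by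
      have : (k:ℝ) < s := by exact_mod_cast hk
      linarith
    nlinarith [Real.pi_pos]
  have hsin : Real.sin θ ≠ 0 := (Real.sin_pos_of_pos_of_lt_pi hθpos hθlt).ne'
  have key : Real.sin ((s+1) * θ) = Real.sin (s * θ) := by
    have e : ((s:ℝ)+1) * θ = (π - s * θ) + k * (2 * π) := by
      rw [hθ]; field_simp; ring
    rw [e, Real.sin_add_nat_mul_two_pi, Real.sin_pi_sub]
  have := diff_eval s θ
  rw [key, sub_self] at this
  exact (mul_eq_zero.mp this).resolve_left hsin

noncomputable def ang (s k : ℕ) : ℝ := (2 * k + 1) * π / (2 * s + 1)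
noncomputable def alp (s k : ℕ) : ℝ := 2 * Real.cos (ang s k)

lemma ang_mem (s k : ℕ) (hk : k < s) : ang s k ∈ Set.Icc 0 π := by
  have hn : (0:ℝ) < 2 * s + 1 := by positivity
  have hπ := Real.pi_pos
  constructor
  · rw [ang]; positivity
  · rw [ang, div_le_iff₀ hn]
    have : (2 * (k:ℝ) + 1) < 2 * s + 1 := by
      have : (k:ℝ) < s := by exact_mod_cast hk
      linarith
    nlinarith [Real.pi_pos]

lemma alp_injOn (s : ℕ) : ∀ k < s, ∀ l < s, alp s k = alp s l → k = l := by
  intro k hk l hl he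
  have hc : Real.cos (ang s k) = Real.cos (ang s l) := by
    have := he; rw [alp, alp] at this; linarith
  have := Real.injOn_cos (ang_mem s k hk) (ang_mem s l hl) hc
  rw [ang, ang, div_eq_div_iff (by positivity) (by positivity)] at this
  have hπ := Real.pi_pos
  have : (k:ℝ) = l := by
    have h2 : (2*(k:ℝ)+1) = 2*l+1 := by
      apply mul_right_cancel₀ (ne_of_gt (by positivity : (0:ℝ) < π * (2*s+1)))
      calc (2*(k:ℝ)+1) * (π * (2*s+1)) = (2*k+1)*π*(2*s+1) := by ring
        _ = (2*l+1)*π*(2*s+1) := this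
        _ = (2*(l:ℝ)+1) * (π * (2*s+1)) := by ring
    linarith
  exact_mod_cast this

lemma diff_eq_prod (s : ℕ) (hs : 1 ≤ s) :
    (c (s+1) - c s).map (Int.castRingHom ℝ)
      = ∏ k ∈ Finset.range s, (X - C (alp s k)) := by
  set P : Polynomial ℝ := (c (s+1) - c s).map (Int.castRingHom ℝ) with hP
  set Q : Polynomial ℝ := ∏ k ∈ Finset.range s, (X - C (alp s k)) with hQ
  have hPm : P.Monic := (diff_monic s hs).map _
  have hPd : P.natDegree = s := by
    rw [hP, (diff_monic s hs).natDegree_map, diff_natDegree s hs]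
  have hQm : Q.Monic := monic_prod_of_monic _ _ fun k _ => monic_X_sub_C _
  have hQd : Q.natDegree = s := by
    rw [hQ, natDegree_prod _ _ fun k _ => X_sub_C_ne_zero _]
    simp [natDegree_X_sub_C]
  by_cases hPQ : P - Q = 0
  · exact sub_eq_zero.mp hPQ
  exfalso
  apply hPQ
  set F : Finset ℝ := (Finset.range s).image (alp s) with hF
  have hcard : F.card = s := by
    rw [hF, Finset.card_image_of_injOn, Finset.card_range]
    intro k hk l hl
    exact alp_injOn s k (Finset.mem_range.mp hk) l (Finset.mem_range.mp hl)
  apply Polynomial.eq_zero_of_natDegree_lt_card_of_eval_eq_zero' _ F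
  · intro x hx
    obtain ⟨k, hk, rfl⟩ := Finset.mem_image.mp hx
    have h1 : P.eval (alp s k) = 0 := diff_root s k (Finset.mem_range.mp hk)
    have h2 : Q.eval (alp s k) = 0 := by
      rw [hQ, eval_prod]
      apply Finset.prod_eq_zero hk
      simp
    rw [eval_sub, h1, h2, sub_zero]
  · rw [hcard]
    have hd : P.degree = Q.degree := by
      rw [degree_eq_natDegree hPm.ne_zero, degree_eq_natDegree hQm.ne_zero, hPd, hQd]
    have hdeg : (P - Q).degree < (s : WithBot ℕ) := by
      have := Polynomial.degree_sub_lt hd hPm.ne_zero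
        (by rw [hPm.leadingCoeff, hQm.leadingCoeff])
      rwa [degree_eq_natDegree hPm.ne_zero, hPd] at this
    exact natDegree_lt_iff_degree_lt hPQ |>.mpr hdeg

instance cycInst (m : ℕ+) : IsCyclotomicExtension {(m:ℕ)} ℚ (CyclotomicField m ℚ) :=
  CyclotomicField.isCyclotomicExtension _ _

noncomputable def gen (m : ℕ+) : CyclotomicField m ℚ := IsCyclotomicExtension.zeta m ℚ _

lemma two_cos_eq (j : ℕ) (m : ℕ+) :
    Complex.exp (2 * ↑π * Complex.I * (↑j / ↑(m:ℕ))) +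
      (Complex.exp (2 * ↑π * Complex.I * (↑j / ↑(m:ℕ))))⁻¹
      = ((2 * Real.cos (2 * π * j / m) : ℝ) : ℂ) := by
  set θ : ℝ := 2 * π * j / m with hθ
  have h1 : 2 * ↑π * Complex.I * (↑j / ↑(m:ℕ)) = (θ:ℂ) * Complex.I := by
    rw [hθ]; push_cast; ring
  rw [h1, ← Complex.exp_neg, Complex.exp_mul_I]
  have h2 : -((θ:ℂ) * Complex.I) = (-θ:ℂ) * Complex.I := by push_cast; ring
  rw [h2, Complex.exp_mul_I, Complex.cos_neg, Complex.sin_neg]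
  push_cast [Complex.ofReal_cos]
  ring

lemma minpoly_two_cos (m : ℕ+) (j : ℕ) (hj : j.Coprime m) :
    minpoly ℚ (2 * Real.cos (2 * π * j / m)) = minpoly ℚ (gen m + (gen m)⁻¹) := by
  have hζ := IsCyclotomicExtension.zeta_spec m ℚ (CyclotomicField m ℚ)
  have hirr := Polynomial.cyclotomic.irreducible_rat (n := (m:ℕ)) m.pos
  set ζj : ℂ := Complex.exp (2 * ↑π * Complex.I * (↑j / ↑(m:ℕ))) with hζjdef
  have hζj : IsPrimitiveRoot ζj m :=
    Complex.isPrimitiveRoot_exp_of_coprime j m m.ne_zero hj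
  have hmem : ζj ∈ primitiveRoots (m:ℕ) ℂ := (mem_primitiveRoots m.pos).2 hζj
  set φ := (hζ.embeddingsEquivPrimitiveRoots ℂ hirr).symm ⟨ζj, hmem⟩ with hφdef
  have hφζ : φ (gen m) = ζj := by
    have h1 : (hζ.embeddingsEquivPrimitiveRoots ℂ hirr) φ = ⟨ζj, hmem⟩ := by
      rw [hφdef, Equiv.apply_symm_apply]
    have h2 := hζ.embeddingsEquivPrimitiveRoots_apply_coe ℂ hirr φ
    rw [h1] at h2
    exact h2.symm
  have hinj : Function.Injective φ := φ.toRingHom.injective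
  have step1 : minpoly ℚ (gen m + (gen m)⁻¹) = minpoly ℚ (φ (gen m + (gen m)⁻¹)) :=
    (minpoly.algHom_eq φ hinj _).symm
  have step2 : φ (gen m + (gen m)⁻¹) = ζj + ζj⁻¹ := by
    rw [map_add, map_inv₀, hφζ]
  have step3 : ζj + ζj⁻¹ = ((2 * Real.cos (2 * π * j / m) : ℝ) : ℂ) := two_cos_eq j m
  have step4 : minpoly ℚ (((2 * Real.cos (2 * π * j / m) : ℝ) : ℂ))
      = minpoly ℚ (2 * Real.cos (2 * π * j / m)) := by
    have := minpoly.algHom_eq (IsScalarTower.toAlgHom ℚ ℝ ℂ) (algebraMap ℝ ℂ).injective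
      (2 * Real.cos (2 * π * j / m))
    exact this
  rw [step1, step2, step3, step4]

lemma root_of_minpoly (m : ℕ+) (x : ℂ)
    (hx : (aeval x) (minpoly ℚ (gen m + (gen m)⁻¹)) = 0) :
    ∃ i : ℕ, i < m ∧ i.Coprime m ∧ x = ((2 * Real.cos (2 * π * i / m) : ℝ) : ℂ) := by
  haveI : FiniteDimensional ℚ (CyclotomicField m ℚ) :=
    IsCyclotomicExtension.finiteDimensional {(m:ℕ)} ℚ (CyclotomicField m ℚ)
  set α : CyclotomicField m ℚ := gen m + (gen m)⁻¹ with hα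
  have hint : IsIntegral ℚ α := IsIntegral.of_finite ℚ α
  have hx' : x ∈ (minpoly ℚ α).aroots ℂ :=
    (Polynomial.mem_aroots).2 ⟨minpoly.ne_zero hint, hx⟩
  set f : ↥ℚ⟮α⟯ →ₐ[ℚ] ℂ :=
    (IntermediateField.algHomAdjoinIntegralEquiv ℚ hint).symm ⟨x, hx'⟩ with hfdef
  haveI : FiniteDimensional (↥ℚ⟮α⟯) (CyclotomicField m ℚ) :=
    FiniteDimensional.right ℚ _ _
  haveI : Algebra.IsAlgebraic (↥ℚ⟮α⟯) (CyclotomicField m ℚ) :=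
    Algebra.IsAlgebraic.of_finite _ _
  obtain ⟨ψ, hψ⟩ := IsAlgClosed.surjective_restrictDomain_of_isAlgebraic
    (K := ℚ) (L := ↥ℚ⟮α⟯) (M := ℂ) (E := CyclotomicField m ℚ) f
  have hψα : ψ α = x := by
    have h1 := IntermediateField.algHomAdjoinIntegralEquiv_symm_apply_gen ℚ hint ⟨x, hx'⟩
    rw [← hfdef] at h1
    have h2 : (AlgHom.domRestrict (↥ℚ⟮α⟯) ψ) (IntermediateField.AdjoinSimple.gen ℚ α)
        = ψ α := rfl
    simp only at hψ
    rw [hψ] at h2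
    rw [← h2]; exact h1
  have hζ := IsCyclotomicExtension.zeta_spec m ℚ (CyclotomicField m ℚ)
  have hη : IsPrimitiveRoot (ψ (gen m)) m :=
    hζ.map_of_injective ψ.toRingHom.injective
  obtain ⟨i, him, hicop, hie⟩ := (Complex.isPrimitiveRoot_iff _ m m.ne_zero).1 hη
  refine ⟨i, him, hicop, ?_⟩
  rw [← hψα, hα, map_add, map_inv₀, ← hie, two_cos_eq]

/-- generic minpoly identification -/
lemma minpoly_eq_gen (n d j : ℕ) (hn : 0 < n) (hd : 0 < d) (hdn : d ∣ n)
    (m : ℕ+) (hm : (m : ℕ) = 2 * (n / d))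
    (hj : j.Coprime (2 * (n / d))) (θ : ℝ) (hθ : θ = π * (j * d) / n) :
    minpoly ℚ (2 * Real.cos θ) = minpoly ℚ (gen m + (gen m)⁻¹) := by
  have h := minpoly_two_cos m j (by rw [Nat.Coprime, hm]; exact hj)
  have hmc : ((m : ℕ) : ℝ) = 2 * ((n : ℝ) / d) := by
    rw [hm]
    push_cast [Nat.cast_div hdn (by exact_mod_cast hd.ne' : (d:ℝ) ≠ 0)]
    ring
  have hang : 2 * π * (j:ℝ) / (m:ℕ) = θ := by
    rw [hθ, hmc]
    have hd0 : (d:ℝ) ≠ 0 := by exact_mod_cast hd.ne'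
    have hn0 : (n:ℝ) ≠ 0 := by exact_mod_cast hn.ne'
    field_simp
  rw [hang] at h
  exact h

lemma dvd_of_minpoly_eq (n d d' : ℕ) (hn : 0 < n) (hd : 0 < d) (hdn : d ∣ n)
    (hd' : 0 < d') (hd'n : d' < n)
    (heq : minpoly ℚ (2 * Real.cos (π * d / n)) = minpoly ℚ (2 * Real.cos (π * d' / n))) :
    d ∣ d' := by
  set m : ℕ+ := ⟨2 * (n / d), by have := Nat.div_pos (Nat.le_of_dvd hn hdn) hd; omega⟩ with hmdef
  have hm : (m : ℕ) = 2 * (n / d) := rfl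
  have hA : minpoly ℚ (2 * Real.cos (π * d / n)) = minpoly ℚ (gen m + (gen m)⁻¹) := by
    apply minpoly_eq_gen n d 1 hn hd hdn m hm (Nat.coprime_one_left _)
    push_cast; ring
  set x : ℝ := 2 * Real.cos (π * d' / n) with hxdef
  have hroot : (aeval ((x : ℂ))) (minpoly ℚ (gen m + (gen m)⁻¹)) = 0 := by
    have h0 : (aeval x) (minpoly ℚ x) = 0 := minpoly.aeval ℚ x
    rw [← heq, hA] at h0
    have : ((x : ℂ)) = algebraMap ℝ ℂ x := rfl
    rw [this, aeval_algebraMap_apply, h0, map_zero]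
  obtain ⟨i, him, -, hie⟩ := root_of_minpoly m _ hroot
  have hxe : x = 2 * Real.cos (2 * π * i / m) := by
    exact_mod_cast hie
  have hcos : Real.cos (π * d' / n) = Real.cos (2 * π * i / m) := by
    rw [hxdef] at hxe; linarith
  -- bounds
  have hn0 : (n:ℝ) ≠ 0 := by exact_mod_cast hn.ne'
  have hd0 : (d:ℝ) ≠ 0 := by exact_mod_cast hd.ne'
  have hm0 : ((m:ℕ):ℝ) > 0 := by exact_mod_cast m.pos
  have hπ := Real.pi_pos
  have hv1 : (0:ℝ) < (d':ℝ)/n := by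
    apply div_pos (by exact_mod_cast hd') (by exact_mod_cast hn)
  have hv2 : (d':ℝ)/n < 1 := by
    rw [div_lt_one (by exact_mod_cast hn)]
    exact_mod_cast hd'n
  have hu1 : (0:ℝ) ≤ (i:ℝ)/(m:ℕ) := by positivity
  have hu2 : (i:ℝ)/(m:ℕ) < 1 := by
    rw [div_lt_one hm0]
    exact_mod_cast him
  have hπ0 : π ≠ 0 := ne_of_gt hπ
  have hmr : ((m:ℕ):ℝ) ≠ 0 := ne_of_gt hm0
  -- analyze
  obtain ⟨t, ht⟩ := Real.cos_eq_cos_iff.mp hcos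
  have key : ∃ i'' : ℕ, (d':ℝ)/n = 2 * i'' / (m:ℕ) := by
    rcases ht with ht | ht
    · have h1 : 2*((i:ℝ)/(m:ℕ)) = 2*(t:ℝ) + (d':ℝ)/n :=
        mul_left_cancel₀ hπ0 (by field_simp at ht ⊢; linarith [ht])
      have htz : t = 0 := by
        have hb : (-1:ℝ) < 2*(t:ℝ) ∧ 2*(t:ℝ) < 2 := by
          constructor <;> linarith [hu1, hu2, hv1, hv2]
        have hb1 : (-1:ℤ) < 2*t := by exact_mod_cast hb.1
        have hb2 : (2*t:ℤ) < 2 := by exact_mod_cast hb.2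
        omega
      refine ⟨i, ?_⟩
      rw [htz] at h1
      push_cast at h1
      have : 2 * (i:ℝ) / (m:ℕ) = 2*((i:ℝ)/(m:ℕ)) := by ring
      rw [this]
      linarith
    · have h1 : 2*((i:ℝ)/(m:ℕ)) = 2*(t:ℝ) - (d':ℝ)/n :=
        mul_left_cancel₀ hπ0 (by field_simp at ht ⊢; linarith [ht])
      have htz : t = 1 := by
        have hb : (0:ℝ) < 2*(t:ℝ) ∧ 2*(t:ℝ) < 3 := by
          constructor <;> linarith [hu1, hu2, hv1, hv2]
        have hb1 : (0:ℤ) < 2*t := by exact_mod_cast hb.1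
        have hb2 : (2*t:ℤ) < 3 := by exact_mod_cast hb.2
        omega
      rw [htz] at h1
      refine ⟨(m:ℕ) - i, ?_⟩
      have hicast : (((m:ℕ) - i : ℕ) : ℝ) = ((m:ℕ):ℝ) - i := by
        rw [Nat.cast_sub him.le]
      rw [hicast]
      push_cast at h1
      field_simp
      field_simp at h1
      linarith
  obtain ⟨i'', hkey⟩ := key
  have hmc : ((m : ℕ) : ℝ) = 2 * ((n : ℝ) / d) := by
    rw [hm]
    push_cast [Nat.cast_div hdn (hd0 : (d:ℝ) ≠ 0)]
    ring
  have hfin : (d' : ℝ) = i'' * d := by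
    rw [hmc] at hkey
    have hnd0 : (n:ℝ)/d ≠ 0 := by
      apply div_ne_zero hn0 hd0
    field_simp at hkey
    have h2n : (2*(n:ℝ)) ≠ 0 := by positivity
    apply mul_right_cancel₀ h2n
    linear_combination (2*(n:ℝ)) * hkey
  have : d' = i'' * d := by exact_mod_cast hfin
  exact ⟨i'', by rw [this, Nat.mul_comm]⟩

lemma isIntegral_of_minpoly_gen (m : ℕ+) (x : ℝ)
    (h : minpoly ℚ x = minpoly ℚ (gen m + (gen m)⁻¹)) : IsIntegral ℚ x := by
  haveI : FiniteDimensional ℚ (CyclotomicField m ℚ) :=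
    IsCyclotomicExtension.finiteDimensional {(m:ℕ)} ℚ (CyclotomicField m ℚ)
  by_contra hc
  have h0 := minpoly.eq_zero hc
  rw [h, ← h0] at h0
  exact minpoly.ne_zero (IsIntegral.of_finite ℚ (gen m + (gen m)⁻¹)) (h0 ▸ (h ▸ minpoly.eq_zero hc))

lemma minpoly_alp_eq (n s k : ℕ) (h : n = 2 * s + 1) (hk : k < s) (m : ℕ+)
    (hm : (m:ℕ) = 2 * (n / Nat.gcd (2*k+1) n)) :
    minpoly ℚ (alp s k) = minpoly ℚ (gen m + (gen m)⁻¹) := by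
  have hn : 0 < n := by omega
  set g := Nat.gcd (2*k+1) n with hg
  have hgpos : 0 < g := Nat.gcd_pos_of_pos_left _ (by omega)
  have hgdvd : g ∣ n := Nat.gcd_dvd_right _ _
  have hgdvd' : g ∣ 2*k+1 := Nat.gcd_dvd_left _ _
  set j := (2*k+1)/g with hj
  have hjg : j * g = 2*k+1 := Nat.div_mul_cancel hgdvd'
  have hcop : j.Coprime (2 * (n/g)) := by
    have c1 : j.Coprime (n/g) := Nat.coprime_div_gcd_div_gcd hgpos
    have hjodd : Odd j := by
      rcases Nat.even_or_odd j with he | ho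
      · exfalso
        have h2j : 2 ∣ j := he.two_dvd
        have : 2 ∣ 2*k+1 := h2j.trans (hjg ▸ dvd_mul_right j g)
        omega
      · exact ho
    exact Nat.Coprime.mul_right hjodd.coprime_two_right c1
  have hjgr : (j:ℝ) * (g:ℝ) = 2*(k:ℝ)+1 := by exact_mod_cast congrArg (Nat.cast : ℕ → ℝ) hjg
  have hang : ang s k = π * ((j:ℝ) * (g:ℝ)) / n := by
    rw [ang, h, hjgr]
    push_cast
    ring
  rw [alp]
  exact minpoly_eq_gen n g j hn hgpos hgdvd m hm hcop _ hang

theorem stmt_18 (n s : ℕ) (h : n = 2 * s + 1) (hn : 3 ≤ n) :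
    (c (s + 1) - c s).map (Int.castRingHom ℚ) =
      ∏ d ∈ n.divisors.filter (· < n),
        minpoly ℚ (2 * Real.cos (π * d / n)) := by
  have hs : 1 ≤ s := by omega
  have hn0 : 0 < n := by omega
  set D := n.divisors.filter (· < n) with hD
  set P : Polynomial ℚ := (c (s + 1) - c s).map (Int.castRingHom ℚ) with hPdef
  have hmemD : ∀ d ∈ D, d ∣ n ∧ d < n ∧ 0 < d := by
    intro d hd
    rw [hD, Finset.mem_filter, Nat.mem_divisors] at hd
    refine ⟨hd.1.1, hd.2, ?_⟩
    rcases Nat.eq_zero_or_pos d with rfl | hpos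
    · exfalso; obtain ⟨e, he⟩ := hd.1.1; omega
    · exact hpos
  -- mval
  have hmpos : ∀ d : ℕ, d ∣ n → 0 < d → 0 < 2 * (n / d) := by
    intro d hdn hd
    have := Nat.div_pos (Nat.le_of_dvd hn0 hdn) hd
    omega
  -- each d in D is odd, giving an index k < s
  have hrep : ∀ d ∈ D, ∃ k < s, ((d:ℝ) = 2 * k + 1) := by
    intro d hd
    obtain ⟨hdvd, hlt, hpos⟩ := hmemD d hd
    have hodd : d % 2 = 1 := by
      rcases Nat.even_or_odd d with he | ho
      · exfalso
        have : 2 ∣ n := (he.two_dvd).trans hdvd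
        omega
      · exact Nat.odd_iff.mp ho
    obtain ⟨k, hk2⟩ : ∃ k, d = 2*k+1 := ⟨d/2, by omega⟩
    exact ⟨k, by omega, by rw [hk2]; push_cast; ring⟩
  -- angle rewriting : π d / n = ang s k when d = 2k+1
  have hang : ∀ d : ℕ, ∀ k < s, ((d:ℝ) = 2 * k + 1) → π * d / n = ang s k := by
    intro d k hk hdk
    rw [ang, hdk, h]
    push_cast
    ring
  have hint : ∀ d ∈ D, IsIntegral ℚ (2 * Real.cos (π * d / n)) := by
    intro d hd
    obtain ⟨hdvd, hlt, hpos⟩ := hmemD d hd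
    exact isIntegral_of_minpoly_gen ⟨2 * (n / d), hmpos d hdvd hpos⟩ _
      (minpoly_eq_gen n d 1 hn0 hpos hdvd ⟨2 * (n / d), hmpos d hdvd hpos⟩ rfl
        (Nat.coprime_one_left _) _ (by push_cast; ring))
  -- Monicity
  have hPm : P.Monic := (diff_monic s hs).map _
  have hQm : (∏ d ∈ D, minpoly ℚ (2 * Real.cos (π * d / n))).Monic :=
    monic_prod_of_monic _ _ fun d hd => minpoly.monic (hint d hd)
  -- distinctness
  have hdist : ∀ d ∈ D, ∀ e ∈ D,
      minpoly ℚ (2 * Real.cos (π * d / n)) = minpoly ℚ (2 * Real.cos (π * e / n)) → d = e := by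
    intro d hd e he heq
    obtain ⟨hdvd, hlt, hpos⟩ := hmemD d hd
    obtain ⟨hdvd', hlt', hpos'⟩ := hmemD e he
    exact Nat.dvd_antisymm (dvd_of_minpoly_eq n d e hn0 hpos hdvd hpos' hlt' heq)
      (dvd_of_minpoly_eq n e d hn0 hpos' hdvd' hpos hlt heq.symm)
  -- direction A : Q ∣ P
  have hQP : (∏ d ∈ D, minpoly ℚ (2 * Real.cos (π * d / n))) ∣ P := by
    apply Finset.prod_dvd_of_coprime
    · intro d hd e he hne
      have hd' : d ∈ D := Finset.mem_coe.mp hd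
      have he' : e ∈ D := Finset.mem_coe.mp he
      have hirr := minpoly.irreducible (hint d hd')
      rw [Function.onFun]
      rw [hirr.coprime_iff_not_dvd]
      intro hdvd
      exact hne (hdist d hd' e he'
        (eq_of_monic_of_associated (minpoly.monic (hint d hd')) (minpoly.monic (hint e he'))
          (hirr.associated_of_dvd (minpoly.irreducible (hint e he')) hdvd)))
    · intro d hd
      apply minpoly.dvd
      obtain ⟨k, hk, hdk⟩ := hrep d hd
      have : (2 : ℝ) * Real.cos (π * d / n) = alp s k := by
        rw [alp, hang d k hk hdk]
      rw [this]
      -- aeval over ℝ of the map-ℚ polynomial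
      rw [hPdef, aeval_def, ← eval_map, Polynomial.map_map]
      have hcomp : (algebraMap ℚ ℝ).comp (Int.castRingHom ℚ) = Int.castRingHom ℝ :=
        RingHom.ext_int _ _
      rw [hcomp]
      simpa [alp, ang] using diff_root s k hk
  -- direction B : P ∣ Q
  have hPQ : P ∣ (∏ d ∈ D, minpoly ℚ (2 * Real.cos (π * d / n))) := by
    rw [← Polynomial.map_dvd_map' (algebraMap ℚ ℝ)]
    have hPr : P.map (algebraMap ℚ ℝ) = (c (s+1) - c s).map (Int.castRingHom ℝ) := by
      rw [hPdef, Polynomial.map_map,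
        RingHom.ext_int ((algebraMap ℚ ℝ).comp (Int.castRingHom ℚ)) (Int.castRingHom ℝ)]
    rw [hPr, diff_eq_prod s hs, Polynomial.map_prod]
    apply Finset.prod_dvd_of_coprime
    · intro k hk l hl hne
      have hk' : k ∈ Finset.range s := Finset.mem_coe.mp hk
      have hl' : l ∈ Finset.range s := Finset.mem_coe.mp hl
      rw [Function.onFun]
      apply Polynomial.isCoprime_X_sub_C_of_isUnit_sub
      rw [isUnit_iff_ne_zero, sub_ne_zero]
      intro hkl
      exact hne (alp_injOn s k (Finset.mem_range.mp hk') l (Finset.mem_range.mp hl') hkl)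
    · intro k hk
      have hks : k < s := Finset.mem_range.mp hk
      set g := Nat.gcd (2*k+1) n with hg
      have hgpos : 0 < g := Nat.gcd_pos_of_pos_left _ (by omega)
      have hgdvd : g ∣ n := Nat.gcd_dvd_right _ _
      have hglt : g < n := by
        have h1 : g ≤ 2*k+1 := Nat.le_of_dvd (by omega) (Nat.gcd_dvd_left _ _)
        omega
      have hgD : g ∈ D := by
        rw [hD, Finset.mem_filter, Nat.mem_divisors]
        exact ⟨⟨hgdvd, hn0.ne'⟩, by simpa using hglt⟩
      have hroot : (X - C (alp s k)) ∣
          (minpoly ℚ (2 * Real.cos (π * g / n))).map (algebraMap ℚ ℝ) := by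
        rw [dvd_iff_isRoot, IsRoot.def, eval_map, ← aeval_def]
        have h1 : minpoly ℚ (alp s k) = minpoly ℚ (2 * Real.cos (π * g / n)) := by
          rw [minpoly_alp_eq n s k h hks ⟨2 * (n/g), hmpos g hgdvd hgpos⟩ rfl,
            minpoly_eq_gen n g 1 hn0 hgpos hgdvd ⟨2 * (n/g), hmpos g hgdvd hgpos⟩ rfl
              (Nat.coprime_one_left _) (π * g / n) (by push_cast; ring)]
        rw [← h1]
        exact minpoly.aeval ℚ _
      exact hroot.trans (Finset.dvd_prod_of_mem _ hgD)
  exact eq_of_monic_of_associated hPm hQm (associated_of_dvd_dvd hPQ hQP)
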